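/- For n ≥ 3, the numbers of maximal matchings of cycle graphs satisfy the recurrence Ψ(C_n) = Ψ(C_{n−2}) + Ψ(C_{n−3}) for n ≥ 6, i.e., the sequence Ψ(C_n) is the Perrin-type sequence with Ψ(C₃) = 3, Ψ(C₄) = 2, Ψ(C₅) = 5. -/

import Mathlib

open SimpleGraph

/-- `M` is a matching of `G`: a set of edges of `G` that are pairwise non-adjacent. -/
def IsGraphMatching {V : Type*} (G : SimpleGraph V) (M : Set (Sym2 V)) : Prop :=
  M ⊆ G.edgeSet ∧ ∀ e ∈ M, ∀ f ∈ M, e ≠ f → ∀ v : V, ¬(v ∈ e ∧ v ∈ f)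

/-- `M` is a maximal matching of `G`: a matching not properly contained in another matching. -/
def IsMaxlMatching {V : Type*} (G : SimpleGraph V) (M : Set (Sym2 V)) : Prop :=
  IsGraphMatching G M ∧ ∀ M', IsGraphMatching G M' → M ⊆ M' → M' = M

/-- vertex `v` is covered by the matching `M`. -/
def MCovers {V : Type*} (M : Set (Sym2 V)) (v : V) : Prop := ∃ e ∈ M, v ∈ e

/-- `Ψ G`: the number of maximal matchings of `G`. -/
noncomputable def Psi {V : Type*} (G : SimpleGraph V) : ℕ :=
  {M : Set (Sym2 V) | IsMaxlMatching G M}.ncard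

namespace PsiAux

def trip (a b c : Bool) : Bool := (!(a && b)) && (!(b && c)) && (a || b || c)

abbrev S := Bool × Bool

def stepOk (p q : S) : Bool := (p.2 == q.1) && trip p.1 p.2 q.2

def t : ℕ → S → S → ℕ
  | 0, p, q => if p = q then 1 else 0
  | (k+1), p, q => ∑ r : S, t k p r * (if stepOk r q then 1 else 0)

def f (n : ℕ) : ℕ := ∑ p : S, t n p p

def L (k : ℕ) (p q : S) : Finset (Fin (k+1) → S) :=
  Finset.univ.filter (fun w => w 0 = p ∧ w (Fin.last k) = q ∧
    ∀ i : Fin k, stepOk (w i.castSucc) (w i.succ) = true)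

def Str (n : ℕ) : Finset (Fin (n+1) → Bool) :=
  Finset.univ.filter (fun x => ∀ i, trip (x i) (x (i+1)) (x (i+2)) = true)

lemma t_CK (a b : ℕ) (p q : S) : t (a + b) p q = ∑ r : S, t a p r * t b r q := by
  induction b generalizing q with
  | zero => simp [t]
  | succ b ih =>
      show t ((a+b)+1) p q = _
      rw [t]
      simp only [ih, Finset.sum_mul, t, Finset.mul_sum]
      rw [Finset.sum_comm]
      exact Finset.sum_congr rfl fun x _ => Finset.sum_congr rfl fun y _ => mul_assoc _ _ _
lemma t_into_dead (k : ℕ) (p : S) : t (k+1) p (true, true) = 0 := by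
  rw [t]
  apply Finset.sum_eq_zero
  intro r _
  have : stepOk r (true, true) = false := by
    cases r with | mk a b => cases a <;> cases b <;> decide
  simp [this]
lemma t_dead (k : ℕ) (p : S) (hp : p ≠ (true, true)) : t k p (true, true) = 0 := by
  cases k with
  | zero => simp [t, hp]
  | succ k => exact t_into_dead k p
lemma t3_eq : ∀ r q : S, r ≠ (true, true) → t 3 r q = t 1 r q + t 0 r q := by decide
lemma t_rec (k : ℕ) (p q : S) (hp : p ≠ (true, true)) :
    t (k+3) p q = t (k+1) p q + t k p q := by
  have h1 : t (k+1) p q = ∑ r : S, t k p r * t 1 r q := t_CK k 1 p q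
  have h0 : t k p q = ∑ r : S, t k p r * t 0 r q := by simpa using t_CK k 0 p q
  rw [t_CK k 3 p q, h1, h0, ← Finset.sum_add_distrib]
  apply Finset.sum_congr rfl
  intro r _
  by_cases hr : r = (true, true)
  · subst hr; rw [t_dead k p hp]; ring
  · rw [t3_eq r q hr]; ring
lemma f_rec (k : ℕ) : f (k+4) = f (k+2) + f (k+1) := by
  unfold f
  rw [← Finset.sum_add_distrib]
  apply Finset.sum_congr rfl
  intro p _
  by_cases hp : p = (true, true)
  · subst hp; rw [t_into_dead, t_into_dead, t_into_dead]
  · exact t_rec (k+1) p p hp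
lemma L_card : ∀ k p q, (L k p q).card = t k p q := by
  intro k
  induction k with
  | zero =>
      intro p q
      by_cases h : p = q
      · subst h
        rw [show t 0 p p = 1 by simp [t]]
        rw [Finset.card_eq_one]
        refine ⟨fun _ => p, ?_⟩
        ext w
        simp only [L, Finset.mem_filter, Finset.mem_univ, true_and, Finset.mem_singleton]
        constructor
        · rintro ⟨h0, -, -⟩
          funext i
          have : i = 0 := Fin.fin_one_eq_zero i
          rw [this, h0]
        · rintro rfl
          exact ⟨rfl, rfl, fun i => i.elim0⟩
      · rw [show t 0 p q = 0 by simp [t, h]]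
        rw [Finset.card_eq_zero]
        ext w
        simp only [L, Finset.mem_filter, Finset.mem_univ, true_and, Finset.notMem_empty,
          iff_false, not_and]
        intro h0 hl
        exact absurd (by rw [← h0, ← hl]; rfl) h
  | succ k ih =>
      intro p q
      have hfib := Finset.card_eq_sum_card_fiberwise
        (f := fun w : Fin (k+2) → S => w (Fin.castSucc (Fin.last k)))
        (s := L (k+1) p q) (t := Finset.univ) (fun w _ => Finset.mem_univ _)
      rw [hfib, t]
      apply Finset.sum_congr rfl
      intro r _
      have hz : Fin.castSucc (0 : Fin (k+1)) = (0 : Fin (k+2)) := by ext; simp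
      by_cases hs : stepOk r q = true
      · rw [if_pos hs, mul_one, ← ih p r]
        refine Finset.card_nbij' (i := Fin.init) (j := fun v => Fin.snoc v q) ?_ ?_ ?_ ?_
        · -- forward membership
          intro w hw
          simp only [Finset.mem_coe, Finset.mem_filter, L, Finset.mem_univ, true_and] at hw ⊢
          obtain ⟨⟨h0, hlast, hlin⟩, hr⟩ := hw
          refine ⟨?_, ?_, ?_⟩
          · show w (Fin.castSucc 0) = p
            rw [hz]; exact h0
          · exact hr
          · intro i
            have := hlin i.castSucc
            rwa [show (i.castSucc).succ = (i.succ).castSucc from (Fin.succ_castSucc i).symm]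
              at this
        · -- backward membership
          intro v hv
          simp only [Finset.mem_coe, Finset.mem_filter, L, Finset.mem_univ, true_and] at hv ⊢
          obtain ⟨h0, hlast, hlin⟩ := hv
          refine ⟨⟨?_, ?_, ?_⟩, ?_⟩
          · rw [← hz, Fin.snoc_castSucc]
            exact h0
          · exact Fin.snoc_last _ _
          · intro i
            refine Fin.lastCases ?_ ?_ i
            · rw [Fin.succ_last, Fin.snoc_last, Fin.snoc_castSucc, hlast]
              exact hs
            · intro j
              rw [Fin.succ_castSucc, Fin.snoc_castSucc, Fin.snoc_castSucc]
              exact hlin j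
          · rw [Fin.snoc_castSucc]
            exact hlast
        · intro w hw
          simp only [Finset.mem_coe, Finset.mem_filter, L, Finset.mem_univ, true_and] at hw
          rw [← hw.1.2.1]
          exact Fin.snoc_init_self w
        · intro v _
          simp
      · rw [if_neg hs, mul_zero, Finset.card_eq_zero]
        ext w
        simp only [Finset.mem_filter, L, Finset.mem_univ, true_and, Finset.notMem_empty,
          iff_false, not_and]
        rintro ⟨h0, hlast, hlin⟩ hr
        apply hs
        have := hlin (Fin.last k)
        rwa [Fin.succ_last, hlast, hr] at this

lemma castSucc_add_one_of_ne_last {n : ℕ} {j : Fin (n+1)} (h : j ≠ Fin.last n) :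
    (j+1).castSucc = j.succ := by
  have hv : j.val < n := Fin.val_lt_last h
  ext
  simp [Fin.val_add_one, h]

def Cyc (n : ℕ) : Finset (Fin (n+1) → S) :=
  Finset.univ.filter (fun w => ∀ i, stepOk (w i) (w (i+1)) = true)

lemma Cyc_card (n : ℕ) : (Cyc n).card = f (n+1) := by
  have hz : Fin.castSucc (0 : Fin (n+1)) = (0 : Fin (n+2)) := by ext; simp
  rw [f]
  rw [Finset.card_eq_sum_card_fiberwise (f := fun w : Fin (n+1) → S => w 0)
    (s := Cyc n) (t := Finset.univ) (fun w _ => Finset.mem_univ _)]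
  apply Finset.sum_congr rfl
  intro p _
  rw [← L_card (n+1) p p]
  refine Finset.card_nbij' (i := fun w => Fin.snoc w (w 0)) (j := Fin.init) ?_ ?_ ?_ ?_
  · intro w hw
    simp only [Finset.mem_coe, Finset.mem_filter, Finset.mem_univ, true_and, Cyc, L] at hw ⊢
    obtain ⟨hcyc, h0⟩ := hw
    refine ⟨?_, ?_, ?_⟩
    · rw [← hz, Fin.snoc_castSucc]; exact h0
    · rw [Fin.snoc_last]; exact h0
    · intro i
      refine Fin.lastCases ?_ ?_ i
      · rw [Fin.succ_last, Fin.snoc_last, Fin.snoc_castSucc]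
        have := hcyc (Fin.last n)
        rwa [Fin.last_add_one] at this
      · intro j
        rw [Fin.succ_castSucc, Fin.snoc_castSucc, Fin.snoc_castSucc]
        have := hcyc j.castSucc
        rwa [Fin.coeSucc_eq_succ] at this
  · intro v hv
    simp only [Finset.mem_coe, Finset.mem_filter, Finset.mem_univ, true_and, Cyc, L] at hv ⊢
    obtain ⟨h0, hlast, hlin⟩ := hv
    constructor
    · intro i
      show stepOk (v i.castSucc) (v (i+1).castSucc) = true
      by_cases hi : i = Fin.last n
      · subst hi
        rw [Fin.last_add_one, hz, h0, ← hlast]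
        have := hlin (Fin.last n)
        rwa [Fin.succ_last] at this
      · rw [castSucc_add_one_of_ne_last hi]
        exact hlin i
    · show v (Fin.castSucc 0) = p
      rw [hz]; exact h0
  · intro w _
    exact Fin.init_snoc _ _
  · intro v hv
    simp only [Finset.mem_coe, Finset.mem_filter, Finset.mem_univ, true_and, L] at hv
    obtain ⟨h0, hlast, -⟩ := hv
    show Fin.snoc (Fin.init v) (Fin.init v 0) = v
    rw [show Fin.init v 0 = v (Fin.last (n+1)) by
      show v (Fin.castSucc 0) = _
      rw [hz, h0, ← hlast]]
    exact Fin.snoc_init_self v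

lemma Str_card (n : ℕ) : (Str n).card = f (n+1) := by
  rw [← Cyc_card]
  have h2 : ∀ i : Fin (n+1), i + 1 + 1 = i + 2 := by
    intro i; grind
  refine Finset.card_nbij' (i := fun x j => (x j, x (j+1))) (j := fun w j => (w j).1)
    ?_ ?_ ?_ ?_
  · intro x hx
    simp only [Finset.mem_coe, Finset.mem_filter, Finset.mem_univ, true_and, Str, Cyc] at hx ⊢
    intro i
    simp only [stepOk, beq_self_eq_true, Bool.true_and]
    rw [h2 i]
    exact hx i
  · intro w hw
    simp only [Finset.mem_coe, Finset.mem_filter, Finset.mem_univ, true_and, Str, Cyc] at hw ⊢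
    intro i
    have h1 := hw i
    have hnext := hw (i+1)
    simp only [stepOk, Bool.and_eq_true, beq_iff_eq] at h1 hnext
    have hx : (w (i+1)).2 = (w (i+2)).1 := by rw [← h2 i]; exact hnext.1
    rw [← h1.1, ← hx]
    exact h1.2
  · intro x _
    rfl
  · intro w hw
    simp only [Finset.mem_coe, Finset.mem_filter, Finset.mem_univ, true_and, Cyc] at hw
    funext i
    have := hw i
    simp only [stepOk, Bool.and_eq_true, beq_iff_eq] at this
    exact Prod.ext rfl this.1.symm
lemma trip_iff (a b c : Bool) : trip a b c = true ↔
    (¬(a = true ∧ b = true)) ∧ (¬(b = true ∧ c = true)) ∧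
    (a = true ∨ b = true ∨ c = true) := by
  revert a b c; decide

def Ed (m : ℕ) (i : Fin (m+3)) : Sym2 (Fin (m+3)) := s(i, i+1)

lemma Ed_mem (m : ℕ) (i : Fin (m+3)) : Ed m i ∈ (cycleGraph (m+3)).edgeSet := by
  rw [Ed, mem_edgeSet, cycleGraph_adj]
  right
  exact add_sub_cancel_left i 1

lemma mem_edgeSet_iff (m : ℕ) (e : Sym2 (Fin (m+3))) :
    e ∈ (cycleGraph (m+3)).edgeSet ↔ ∃ i, e = Ed m i := by
  constructor
  · refine Sym2.ind (fun u v h => ?_) e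
    rw [mem_edgeSet, cycleGraph_adj] at h
    rcases h with h | h
    · refine ⟨v, ?_⟩
      rw [sub_eq_iff_eq_add] at h
      rw [Ed, Sym2.eq_iff]
      right
      exact ⟨by rw [h]; grind, rfl⟩
    · refine ⟨u, ?_⟩
      rw [sub_eq_iff_eq_add] at h
      rw [Ed, Sym2.eq_iff]
      left
      exact ⟨rfl, by rw [h]; grind⟩
  · rintro ⟨i, rfl⟩; exact Ed_mem m i

lemma two_ne_zero' (m : ℕ) : (2 : Fin (m+3)) ≠ 0 := by simp [Fin.ext_iff, Nat.mod_eq_of_lt (by omega : 2 < m+3)]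
lemma one_ne_zero' (m : ℕ) : (1 : Fin (m+3)) ≠ 0 := by simp [Fin.ext_iff]

lemma Ed_inj (m : ℕ) : Function.Injective (Ed m) := by
  intro i j h
  rw [Ed, Ed, Sym2.eq_iff] at h
  rcases h with ⟨h, -⟩ | ⟨h1, h2⟩
  · exact h
  · exfalso
    apply two_ne_zero' m
    have : j + 1 + 1 = j := by rw [← h1, h2]
    rw [add_assoc, add_eq_left] at this
    grind

lemma mem_Ed_iff {m : ℕ} (v i : Fin (m+3)) : v ∈ Ed m i ↔ v = i ∨ v = i + 1 :=
  Sym2.mem_iff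

lemma share {m : ℕ} {a b v : Fin (m+3)} (h1 : v ∈ Ed m a) (h2 : v ∈ Ed m b) :
    a = b ∨ a = b + 1 ∨ b = a + 1 := by
  rw [mem_Ed_iff] at h1 h2
  rcases h1 with rfl | rfl
  · rcases h2 with rfl | h
    · exact Or.inl rfl
    · exact Or.inr (Or.inl h)
  · rcases h2 with h | h
    · exact Or.inr (Or.inr h.symm)
    · exact Or.inl (add_right_cancel h)

def Fm (m : ℕ) (x : Fin (m+3) → Bool) : Set (Sym2 (Fin (m+3))) :=
  Ed m '' {i | x i = true}

lemma mem_Fm {m : ℕ} {x : Fin (m+3) → Bool} {i : Fin (m+3)} :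
    Ed m i ∈ Fm m x ↔ x i = true := by
  constructor
  · rintro ⟨j, hj, hEq⟩
    rwa [← Ed_inj m hEq]
  · intro h; exact ⟨i, h, rfl⟩

lemma Fm_inj (m : ℕ) : Function.Injective (Fm m) := by
  intro x y h
  funext i
  have := mem_Fm (m := m) (x := x) (i := i)
  rw [h, mem_Fm] at this
  cases hx : x i <;> cases hy : y i <;> simp_all

lemma Fm_matching {m : ℕ} {x : Fin (m+3) → Bool}
    (hx : ∀ i, trip (x i) (x (i+1)) (x (i+2)) = true) :
    IsGraphMatching (cycleGraph (m+3)) (Fm m x) := by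
  constructor
  · rintro e ⟨i, -, rfl⟩; exact Ed_mem m i
  · rintro e ⟨i, hxi, rfl⟩ f ⟨j, hxj, rfl⟩ hne v ⟨hvi, hvj⟩
    simp only [Set.mem_setOf_eq] at hxi hxj
    rcases share hvi hvj with h | h | h
    · exact hne (by rw [h])
    · exact ((trip_iff _ _ _).mp (hx j)).1 ⟨hxj, by rw [← h]; exact hxi⟩
    · exact ((trip_iff _ _ _).mp (hx i)).1 ⟨hxi, by rw [← h]; exact hxj⟩

lemma Fm_maxl {m : ℕ} {x : Fin (m+3) → Bool}
    (hx : ∀ i, trip (x i) (x (i+1)) (x (i+2)) = true) :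
    IsMaxlMatching (cycleGraph (m+3)) (Fm m x) := by
  refine ⟨Fm_matching hx, ?_⟩
  intro M' hM' hsub
  refine Set.eq_of_subset_of_subset ?_ hsub
  intro f hf
  obtain ⟨j, rfl⟩ := (mem_edgeSet_iff m f).mp (hM'.1 hf)
  by_cases hj : x j = true
  · exact ⟨j, hj, rfl⟩
  · exfalso
    have h3 := ((trip_iff _ _ _).mp (hx (j-1))).2.2
    rw [sub_add_cancel, (by grind : j - 1 + 2 = j + 1)] at h3
    rcases h3 with h | h | h
    · have hmem : Ed m (j-1) ∈ M' := hsub ⟨_, h, rfl⟩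
      have hne : Ed m (j-1) ≠ Ed m j := by
        intro hEq
        have := Ed_inj m hEq
        rw [sub_eq_self] at this
        exact one_ne_zero' m this
      refine hM'.2 _ hmem _ hf hne j ⟨?_, ?_⟩
      · rw [mem_Ed_iff]; right; rw [sub_add_cancel]
      · rw [mem_Ed_iff]; left; rfl
    · exact hj h
    · have hmem : Ed m (j+1) ∈ M' := hsub ⟨_, h, rfl⟩
      have hne : Ed m (j+1) ≠ Ed m j := by
        intro hEq
        have := Ed_inj m hEq
        rw [add_eq_left] at this
        exact one_ne_zero' m this
      refine hM'.2 _ hmem _ hf hne (j+1) ⟨?_, ?_⟩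
      · rw [mem_Ed_iff]; left; rfl
      · rw [mem_Ed_iff]; right; rfl

lemma not_both {m : ℕ} {M : Set (Sym2 (Fin (m+3)))}
    (hM : IsGraphMatching (cycleGraph (m+3)) M) (k : Fin (m+3)) :
    ¬(Ed m k ∈ M ∧ Ed m (k+1) ∈ M) := by
  rintro ⟨h1, h2⟩
  have hne : Ed m k ≠ Ed m (k+1) := by
    intro hEq
    have := Ed_inj m hEq
    rw [left_eq_add] at this
    exact one_ne_zero' m this
  refine hM.2 _ h1 _ h2 hne (k+1) ⟨?_, ?_⟩
  · rw [mem_Ed_iff]; right; rfl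
  · rw [mem_Ed_iff]; left; rfl

lemma maxl_eq {m : ℕ} {M : Set (Sym2 (Fin (m+3)))}
    (hM : IsMaxlMatching (cycleGraph (m+3)) M) :
    ∃ x : Fin (m+3) → Bool,
      (∀ i, trip (x i) (x (i+1)) (x (i+2)) = true) ∧ M = Fm m x := by
  classical
  refine ⟨fun i => decide (Ed m i ∈ M), ?_, ?_⟩
  · intro i
    rw [trip_iff]
    simp only [decide_eq_true_eq]
    refine ⟨not_both hM.1 i, ?_, ?_⟩
    · have := not_both hM.1 (i+1)
      rwa [(by grind : i + 1 + 1 = i + 2)] at this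
    · by_contra hcon
      push_neg at hcon
      obtain ⟨hni, hni1, hni2⟩ := hcon
      set M' : Set (Sym2 (Fin (m+3))) := insert (Ed m (i+1)) M with hM'def
      have hmatch : IsGraphMatching (cycleGraph (m+3)) M' := by
        constructor
        · exact Set.insert_subset (Ed_mem m (i+1)) hM.1.1
        · intro e he f hf hne v hv
          rcases he with rfl | he
          · rcases hf with rfl | hf
            · exact hne rfl
            · obtain ⟨j, rfl⟩ := (mem_edgeSet_iff m f).mp (hM.1.1 hf)
              rcases share hv.1 hv.2 with h | h | h
              · exact hni1 (by rwa [h])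
              · have : i = j := add_right_cancel h
                exact hni (by rwa [this])
              · rw [(by grind : i + 1 + 1 = i + 2)] at h
                exact hni2 (by rwa [← h])
          · rcases hf with rfl | hf
            · obtain ⟨j, rfl⟩ := (mem_edgeSet_iff m e).mp (hM.1.1 he)
              rcases share hv.2 hv.1 with h | h | h
              · exact hni1 (by rwa [h])
              · have : i = j := add_right_cancel h
                exact hni (by rwa [this])
              · rw [(by grind : i + 1 + 1 = i + 2)] at h
                exact hni2 (by rwa [← h])
            · exact hM.1.2 _ he _ hf hne v hv
      have := hM.2 M' hmatch (Set.subset_insert _ _)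
      exact hni1 (this ▸ Set.mem_insert _ _)
  · ext e
    simp only [Fm, Set.mem_image, Set.mem_setOf_eq, decide_eq_true_eq]
    constructor
    · intro he
      obtain ⟨j, rfl⟩ := (mem_edgeSet_iff m e).mp (hM.1.1 he)
      exact ⟨j, he, rfl⟩
    · rintro ⟨j, hj, rfl⟩
      exact hj

lemma psi_eq (m : ℕ) : Psi (cycleGraph (m+3)) = (Str (m+2)).card := by
  classical
  have hset : {M : Set (Sym2 (Fin (m+3))) | IsMaxlMatching (cycleGraph (m+3)) M}
      = Fm m '' (↑(Str (m+2)) : Set (Fin (m+3) → Bool)) := by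
    ext M
    simp only [Set.mem_setOf_eq, Set.mem_image, Finset.mem_coe, Str, Finset.mem_filter,
      Finset.mem_univ, true_and]
    constructor
    · intro hM
      obtain ⟨x, hx, rfl⟩ := maxl_eq hM
      exact ⟨x, hx, rfl⟩
    · rintro ⟨x, hx, rfl⟩
      exact Fm_maxl hx
  rw [Psi, hset, Set.ncard_image_of_injective _ (Fm_inj m), Set.ncard_coe_finset]

end PsiAux

theorem psi_cycle_recurrence :
    Psi (cycleGraph 3) = 3 ∧ Psi (cycleGraph 4) = 2 ∧ Psi (cycleGraph 5) = 5 ∧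
      ∀ n : ℕ, 6 ≤ n →
        Psi (cycleGraph n) = Psi (cycleGraph (n - 2)) + Psi (cycleGraph (n - 3)) := by
  have base : ∀ m : ℕ, Psi (cycleGraph (m+3)) = PsiAux.f (m+3) := by
    intro m
    rw [PsiAux.psi_eq m, PsiAux.Str_card]
  refine ⟨(base 0).trans (by decide), (base 1).trans (by decide),
    (base 2).trans (by decide), ?_⟩
  intro n hn
  obtain ⟨k, rfl⟩ : ∃ k, n = k + 6 := ⟨n - 6, by omega⟩
  calc Psi (cycleGraph (k+6)) = PsiAux.f (k+6) := base (k+3)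
    _ = PsiAux.f (k+4) + PsiAux.f (k+3) := PsiAux.f_rec (k+2)
    _ = Psi (cycleGraph (k+6-2)) + Psi (cycleGraph (k+6-3)) :=
        (congrArg₂ (·+·) (base (k+1)) (base k)).symm
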